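/- Let A be an m×n real matrix with rows a_1,…,a_m and b ∈ ℝ^m, and suppose the system a_i x ≤ b_i (i = 1,…,m) is minimally infeasible. Then for every i ∈ {1,…,m} there exists x^(i) ∈ ℝ^n with a_i x^(i) > b_i and a_k x^(i) = b_k for all k ≠ i. -/

import Mathlib

open Finset

variable {E : Type*} [NormedAddCommGroup E] [InnerProductSpace ℝ E]
  {ι : Type*} [Fintype ι] [DecidableEq ι]

/-- conic combinations of `w` supported on `s` -/
def coneOn (w : ι → E) (s : Finset ι) : Set E :=
  {x | ∃ c : ι → ℝ, (∀ i, 0 ≤ c i) ∧ (∀ i ∉ s, c i = 0) ∧ ∑ i, c i • w i = x}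

/-- all conic combinations -/
def coneSet (w : ι → E) : Set E := {x | ∃ c : ι → ℝ, (∀ i, 0 ≤ c i) ∧ ∑ i, c i • w i = x}

lemma carath_step (w : ι → E) (s : Finset ι) (c d : ι → ℝ)
    (hc : ∀ i, 0 ≤ c i) (hcs : ∀ i ∉ s, c i = 0)
    (hd0 : ∀ i ∉ s, d i = 0) (hdsum : ∑ i, d i • w i = 0)
    (hdpos : ∃ i, 0 < d i) :
    ∃ i₀ ∈ s, ∃ c' : ι → ℝ, (∀ i, 0 ≤ c' i) ∧ (∀ i ∉ s.erase i₀, c' i = 0) ∧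
      ∑ i, c' i • w i = ∑ i, c i • w i := by
  classical
  have hF : (s.filter (fun i => 0 < d i)).Nonempty := by
    obtain ⟨i, hi⟩ := hdpos
    exact ⟨i, mem_filter.2 ⟨by by_contra h; rw [hd0 i h] at hi; exact lt_irrefl _ hi, hi⟩⟩
  obtain ⟨i₀, hi₀, hmin⟩ := (s.filter (fun i => 0 < d i)).exists_min_image (fun i => c i / d i) hF
  rw [mem_filter] at hi₀
  obtain ⟨hi₀s, hdi₀⟩ := hi₀
  set t : ℝ := c i₀ / d i₀ with ht
  have ht0 : 0 ≤ t := div_nonneg (hc i₀) hdi₀.le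
  refine ⟨i₀, hi₀s, fun i => c i - t * d i, ?_, ?_, ?_⟩
  · intro i
    show 0 ≤ c i - t * d i
    rcases le_or_gt (d i) 0 with h | h
    · have : t * d i ≤ 0 := mul_nonpos_of_nonneg_of_nonpos ht0 h
      linarith [hc i]
    · have hi : i ∈ s := by by_contra hh; rw [hd0 i hh] at h; exact lt_irrefl _ h
      have := hmin i (mem_filter.2 ⟨hi, h⟩)
      rw [le_div_iff₀ h] at this
      linarith
  · intro i hi
    show c i - t * d i = 0
    by_cases his : i ∈ s
    · have : i = i₀ := by
        by_contra hne
        exact hi (Finset.mem_erase.2 ⟨hne, his⟩)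
      subst this
      rw [ht, div_mul_cancel₀ _ hdi₀.ne', sub_self]
    · rw [hcs i his, hd0 i his]; ring
  · have : ∑ i, (c i - t * d i) • w i = ∑ i, c i • w i - t • ∑ i, d i • w i := by
      rw [Finset.smul_sum, ← Finset.sum_sub_distrib]
      congr 1; funext i; rw [sub_smul, smul_smul]
    rw [this, hdsum, smul_zero, sub_zero]

lemma caratheodory_cone (w : ι → E) (s : Finset ι) (c : ι → ℝ)
    (hc : ∀ i, 0 ≤ c i) (hcs : ∀ i ∉ s, c i = 0) :
    ∃ t : Finset ι, LinearIndependent ℝ (fun i : t => w i) ∧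
      (∑ i, c i • w i) ∈ coneOn w t := by
  classical
  induction s using Finset.strongInduction generalizing c with
  | _ s ih =>
    by_cases hli : LinearIndependent ℝ (fun i : s => w i)
    · exact ⟨s, hli, c, hc, hcs, rfl⟩
    · obtain ⟨g, hgsum, i₁, hgi₁⟩ := Fintype.not_linearIndependent_iff.1 hli
      set d : ι → ℝ := fun i => if h : i ∈ s then g ⟨i, h⟩ else 0 with hd
      have hd0 : ∀ i ∉ s, d i = 0 := fun i hi => by simp [hd, hi]
      have hdsum : ∑ i, d i • w i = 0 := by
        rw [← Finset.sum_subset (Finset.subset_univ s)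
          (fun i _ hi => by rw [hd0 i hi, zero_smul])]
        rw [← Finset.sum_attach s (fun i => d i • w i)]
        simpa [hd] using hgsum
      have key : ∀ d' : ι → ℝ, (∀ i ∉ s, d' i = 0) → (∑ i, d' i • w i = 0) →
          (∃ i, 0 < d' i) → ∃ t : Finset ι, LinearIndependent ℝ (fun i : t => w i) ∧
            (∑ i, c i • w i) ∈ coneOn w t := by
        intro d' hd0' hdsum' hdpos'
        obtain ⟨i₀, hi₀s, c', hc', hc's, hsum⟩ :=
          carath_step w s c d' hc hcs hd0' hdsum' hdpos'
        obtain ⟨t, hli', ht⟩ := ih (s.erase i₀) (Finset.erase_ssubset hi₀s) c' hc' hc's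
        exact ⟨t, hli', by rwa [← hsum]⟩
      rcases lt_trichotomy (d i₁) 0 with h | h | h
      · refine key (-d) (fun i hi => by simp [hd0 i hi]) ?_ ⟨i₁, by simpa using h⟩
        rw [← neg_zero, ← hdsum, ← Finset.sum_neg_distrib]
        congr 1; funext i; rw [Pi.neg_apply, neg_smul]
      · exfalso; apply hgi₁; simpa [hd, i₁.2] using h
      · exact key d hd0 hdsum ⟨i₁, h⟩

lemma isClosed_coneOn (w : ι → E) [T2Space E] (t : Finset ι)
    (hli : LinearIndependent ℝ (fun i : t => w i)) : IsClosed (coneOn w t) := by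
  classical
  set f : (t → ℝ) →ₗ[ℝ] E :=
    { toFun := fun c => ∑ i : t, c i • w i
      map_add' := by intro a b; simp [add_smul, Finset.sum_add_distrib]
      map_smul' := by intro r a; simp [smul_smul, Finset.smul_sum] }
  have hker : LinearMap.ker f = ⊥ := by
    rw [LinearMap.ker_eq_bot']
    intro g hg
    funext i
    exact Fintype.linearIndependent_iff.1 hli g hg i
  have hemb := f.isClosedEmbedding_of_injective hker
  have : coneOn w t = f '' {c : t → ℝ | ∀ i, 0 ≤ c i} := by
    ext x
    constructor
    · rintro ⟨c, hc, hcs, rfl⟩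
      refine ⟨fun i => c i, fun i => hc i, ?_⟩
      show ∑ i : t, c i • w i = ∑ i, c i • w i
      rw [Finset.sum_coe_sort t (fun i => c i • w i)]
      have := Finset.sum_subset (Finset.subset_univ t)
        (f := fun i => c i • w i) (fun i _ hi => show c i • w i = 0 by rw [hcs i hi, zero_smul])
      simpa using this
    · rintro ⟨c, hc, rfl⟩
      refine ⟨fun i => if h : i ∈ t then c ⟨i, h⟩ else 0, fun i => ?_, fun i hi => by simp [hi], ?_⟩
      · by_cases h : i ∈ t
        · simpa [h] using hc ⟨i, h⟩
        · simp [h]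
      · show ∑ i, (if h : i ∈ t then c ⟨i, h⟩ else 0) • w i = ∑ i : t, c i • w i
        rw [← Finset.sum_subset (Finset.subset_univ t)
          (fun i _ hi => by simp [hi]),
          ← Finset.sum_coe_sort t fun i => (if h : i ∈ t then c ⟨i, h⟩ else 0) • w i]
        exact Finset.sum_congr rfl fun i _ => by simp [i.2]
  rw [this]
  refine hemb.isClosedMap _ ?_
  have : {c : t → ℝ | ∀ i, 0 ≤ c i} = ⋂ i : t, {c : t → ℝ | 0 ≤ c i} := by
    ext c; simp
  rw [this]
  exact isClosed_iInter fun i => isClosed_le continuous_const (continuous_apply i)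

lemma isClosed_coneSet (w : ι → E) [T2Space E] : IsClosed (coneSet w) := by
  classical
  have : coneSet w =
      ⋃ t ∈ {t : Finset ι | LinearIndependent ℝ (fun i : t => w i)}, coneOn w t := by
    ext x
    simp only [Set.mem_iUnion, Set.mem_setOf_eq]
    constructor
    · rintro ⟨c, hc, rfl⟩
      obtain ⟨t, hli, ht⟩ := caratheodory_cone w Finset.univ c hc (by simp)
      exact ⟨t, hli, ht⟩
    · rintro ⟨t, _, c, hc, _, rfl⟩
      exact ⟨c, hc, rfl⟩
  rw [this]
  exact Set.Finite.isClosed_biUnion (Set.toFinite _) fun t ht => isClosed_coneOn w t ht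

open scoped RealInnerProductSpace
open Matrix

lemma euclid_sum_coord {ι : Type*} [Fintype ι] {n : ℕ} (c : ι → ℝ)
    (w : ι → EuclideanSpace ℝ (Fin n))
    (j : Fin n) (p : EuclideanSpace ℝ (Fin n)) (h : ∑ i, c i • w i = p) :
    ∑ i, c i * w i j = p j := by
  have := congrArg (fun v : EuclideanSpace ℝ (Fin n) => v j) h
  simpa [smul_eq_mul, WithLp.ofLp_sum] using this

lemma euclid_inner_eq {n : ℕ} (x y : EuclideanSpace ℝ (Fin n)) :
    ⟪x, y⟫ = ∑ j, x j * y j := by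
  simp [PiLp.inner_apply, RCLike.inner_apply, conj_trivial]
  exact Finset.sum_congr rfl fun _ _ => mul_comm _ _

theorem farkas (m n : ℕ) (A : Matrix (Fin m) (Fin n) ℝ) (b : Fin m → ℝ) :
    (∃ x : Fin n → ℝ, ∀ i, A i ⬝ᵥ x ≤ b i) ∨
    (∃ l : Fin m → ℝ, (∀ i, 0 ≤ l i) ∧ (∀ j, ∑ i, l i * A i j = 0) ∧ ∑ i, l i * b i < 0) := by
  classical
  set w : (Fin m ⊕ Unit) → EuclideanSpace ℝ (Fin (n+1)) :=
    Sum.elim (fun k => WithLp.toLp 2 (Fin.snoc (A k) (b k) : Fin (n+1) → ℝ))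
      (fun _ => WithLp.toLp 2 (Fin.snoc (0 : Fin n → ℝ) 1 : Fin (n+1) → ℝ)) with hw
  set p : EuclideanSpace ℝ (Fin (n+1)) := WithLp.toLp 2 (Fin.snoc (0 : Fin n → ℝ) (-1) : Fin (n+1) → ℝ) with hp
  by_cases hmem : p ∈ coneSet w
  · right
    obtain ⟨c, hc, hsum⟩ := hmem
    refine ⟨fun k => c (Sum.inl k), fun k => hc _, ?_, ?_⟩
    · intro j
      have h1 := euclid_sum_coord c w (Fin.castSucc j) p hsum
      rw [Fintype.sum_sum_type] at h1
      simpa [hw, hp, Fin.snoc_castSucc] using h1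
    · have h1 := euclid_sum_coord c w (Fin.last n) p hsum
      rw [Fintype.sum_sum_type] at h1
      simp only [hw, hp, Sum.elim_inl, Sum.elim_inr, Fin.snoc_last,
        Finset.univ_unique, Finset.sum_singleton, mul_one] at h1
      have := hc (Sum.inr ())
      linarith
  · left
    set K : ConvexCone ℝ (EuclideanSpace ℝ (Fin (n+1))) :=
      { carrier := coneSet w
        smul_mem' := by
          rintro r hr x ⟨c, hc, rfl⟩
          exact ⟨fun i => r * c i, fun i => mul_nonneg hr.le (hc i), by
            rw [Finset.smul_sum]; exact Finset.sum_congr rfl fun i _ => (smul_smul r (c i) (w i)).symm⟩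
        add_mem' := by
          rintro x ⟨c, hc, rfl⟩ y ⟨c', hc', rfl⟩
          exact ⟨fun i => c i + c' i, fun i => add_nonneg (hc i) (hc' i), by
            rw [← Finset.sum_add_distrib]
            exact Finset.sum_congr rfl fun i _ => add_smul (c i) (c' i) (w i)⟩ } with hK
    have hne : (K : Set (EuclideanSpace ℝ (Fin (n+1)))).Nonempty :=
      ⟨0, ⟨0, fun i => le_refl 0, by simp⟩⟩
    have hcl : IsClosed (K : Set (EuclideanSpace ℝ (Fin (n+1)))) := isClosed_coneSet w
    obtain ⟨y, hy1, hy2⟩ : ∃ y, (∀ x ∈ K, 0 ≤ ⟪x, y⟫) ∧ ⟪y, p⟫ < 0 := by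
      obtain ⟨y, h1, h2⟩ := ProperCone.hyperplane_separation'
        ({ toSubmodule := K.toPointedCone ⟨0, fun i => le_refl 0, by simp⟩, isClosed' := hcl } :
          ProperCone ℝ (EuclideanSpace ℝ (Fin (n+1)))) hmem
      exact ⟨y, h1, by rwa [real_inner_comm]⟩
    have hwK : ∀ i, w i ∈ K := by
      intro i
      refine ⟨fun i' => if i' = i then 1 else 0, fun i' => by positivity, ?_⟩
      rw [Finset.sum_congr rfl (fun i' _ => show (if i' = i then (1:ℝ) else 0) • w i' =
        if i' = i then w i' else 0 by split <;> simp)]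
      simp
    have hylast : 0 < y (Fin.last n) := by
      have h2 : ⟪y, p⟫ = - y (Fin.last n) := by
        rw [euclid_inner_eq, Fin.sum_univ_castSucc]
        simp [hp, Fin.snoc_castSucc, Fin.snoc_last]
      rw [h2] at hy2
      linarith
    have hrow : ∀ k, 0 ≤ ∑ j, A k j * y (Fin.castSucc j) + b k * y (Fin.last n) := by
      intro k
      have h3 := hy1 (w (Sum.inl k)) (hwK _)
      rw [euclid_inner_eq, Fin.sum_univ_castSucc] at h3
      simpa [hw, Fin.snoc_castSucc, Fin.snoc_last] using h3
    refine ⟨fun j => -y (Fin.castSucc j) / y (Fin.last n), fun k => ?_⟩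
    have expand : A k ⬝ᵥ (fun j => -y (Fin.castSucc j) / y (Fin.last n)) =
        (∑ j, -(A k j * y (Fin.castSucc j))) / y (Fin.last n) := by
      rw [Finset.sum_div]
      show (∑ j, A k j * (-y (Fin.castSucc j) / y (Fin.last n))) = _
      exact Finset.sum_congr rfl fun j _ => by ring
    rw [expand, div_le_iff₀ hylast, Finset.sum_neg_distrib]
    have := hrow k
    linarith

lemma sum_dot {m n : ℕ} (A : Matrix (Fin m) (Fin n) ℝ) (c : Fin m → ℝ) (x : Fin n → ℝ) :
    ∑ k, c k * (A k ⬝ᵥ x) = ∑ j, (∑ k, c k * A k j) * x j := by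
  calc ∑ k, c k * (A k ⬝ᵥ x) = ∑ k, ∑ j, c k * (A k j * x j) := by
        exact Finset.sum_congr rfl fun k _ => by
          show c k * (∑ j, A k j * x j) = _
          rw [Finset.mul_sum]
    _ = ∑ j, ∑ k, c k * (A k j * x j) := Finset.sum_comm
    _ = ∑ j, (∑ k, c k * A k j) * x j := by
        exact Finset.sum_congr rfl fun j _ => by
          rw [Finset.sum_mul]
          exact Finset.sum_congr rfl fun k _ => by ring

lemma cert_contra {m n : ℕ} (A : Matrix (Fin m) (Fin n) ℝ) (b : Fin m → ℝ)
    (ν : Fin m → ℝ) (hν : ∀ k, 0 ≤ ν k) (hA : ∀ j, ∑ k, ν k * A k j = 0)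
    (hb : ∑ k, ν k * b k < 0) (j : Fin m) (hj : ν j = 0)
    (x : Fin n → ℝ) (hx : ∀ k, k ≠ j → A k ⬝ᵥ x ≤ b k) : False := by
  have h0 : ∑ k, ν k * (A k ⬝ᵥ x) = 0 := by
    rw [sum_dot]
    exact Finset.sum_eq_zero fun j' _ => by rw [hA j', zero_mul]
  have hle : ∑ k, ν k * (A k ⬝ᵥ x) ≤ ∑ k, ν k * b k := by
    refine Finset.sum_le_sum fun k _ => ?_
    by_cases hk : k = j
    · subst hk; rw [hj]; simp
    · exact mul_le_mul_of_nonneg_left (hx k hk) (hν k)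
  linarith

lemma eq_system_alternative {m n : ℕ} (A : Matrix (Fin m) (Fin n) ℝ) (b : Fin m → ℝ)
    (i : Fin m) :
    (∃ x : Fin n → ℝ, ∀ k, k ≠ i → A k ⬝ᵥ x = b k) ∨
    (∃ μ : Fin m → ℝ, μ i = 0 ∧ (∀ j, ∑ k, μ k * A k j = 0) ∧ ∑ k, μ k * b k < 0) := by
  classical
  set A' : Matrix (Fin m) (Fin n) ℝ := Function.update A i 0 with hA'
  set b' : Fin m → ℝ := Function.update b i 0 with hb'
  have hA'ne : ∀ k, k ≠ i → A' k = A k := fun k hk => Function.update_of_ne hk _ _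
  have hb'ne : ∀ k, k ≠ i → b' k = b k := fun k hk => Function.update_of_ne hk _ _
  set T : (Fin n → ℝ) →ₗ[ℝ] EuclideanSpace ℝ (Fin m) := (WithLp.linearEquiv 2 ℝ (Fin m → ℝ)).symm.toLinearMap ∘ₗ A'.mulVecLin with hT
  set W : Submodule ℝ (EuclideanSpace ℝ (Fin m)) := LinearMap.range T with hW
  by_cases hq : (WithLp.toLp 2 b' : EuclideanSpace ℝ (Fin m)) ∈ W
  · left
    obtain ⟨x, hx⟩ := hq
    refine ⟨x, fun k hk => ?_⟩
    have : A' k ⬝ᵥ x = b' k := congrArg (fun v : EuclideanSpace ℝ (Fin m) => v k) hx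
    rw [hb'ne k hk] at this
    rw [← hA'ne k hk]
    exact this
  · right
    set q : EuclideanSpace ℝ (Fin m) := WithLp.toLp 2 b' with hqdef
    set u : EuclideanSpace ℝ (Fin m) := (W.orthogonalProjectionOnto q : EuclideanSpace ℝ (Fin m)) with hu
    set v : EuclideanSpace ℝ (Fin m) := q - u with hv
    have hvW : v ∈ Wᗮ := W.sub_starProjection_mem_orthogonal q
    have hvne : v ≠ 0 := by
      intro h
      apply hq
      have : q = u := by rwa [hv, sub_eq_zero] at h
      rw [this]; exact (W.orthogonalProjectionOnto q).2
    have hvq : ⟪v, q⟫ = ‖v‖ ^ 2 := by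
      have h1 : ⟪v, u⟫ = 0 := by
        have := hvW u (W.orthogonalProjectionOnto q).2
        rwa [real_inner_comm] at this
      have : ⟪v, q⟫ = ⟪v, v⟫ + ⟪v, u⟫ := by
        rw [← inner_add_right]
        congr 1
        rw [hv]; abel
      rw [this, h1, add_zero, real_inner_self_eq_norm_sq]
    have hrows : ∀ j, ∑ k, v k * A' k j = 0 := by
      intro j
      have h1 := hvW (T (Pi.single j 1)) ⟨Pi.single j 1, rfl⟩
      rw [euclid_inner_eq] at h1
      have h2 : ∀ k, (T (Pi.single j 1)) k = A' k j := by
        intro k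
        show A' k ⬝ᵥ Pi.single j 1 = A' k j
        rw [dotProduct_single, mul_one]
      rw [Finset.sum_congr rfl (fun k _ => by rw [h2 k])] at h1
      rw [← h1]
      exact Finset.sum_congr rfl fun k _ => mul_comm _ _
    refine ⟨fun k => if k = i then 0 else -(v k), by simp, ?_, ?_⟩
    · intro j
      have : ∑ k, (if k = i then 0 else -(v k)) * A k j = -∑ k, v k * A' k j := by
        rw [← Finset.sum_neg_distrib]
        refine Finset.sum_congr rfl fun k _ => ?_
        by_cases hk : k = i
        · subst hk; rw [if_pos rfl, show A' k = 0 from Function.update_self k 0 A]; simp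
        · rw [if_neg hk, hA'ne k hk]; ring
      rw [this, hrows j, neg_zero]
    · have : ∑ k, (if k = i then 0 else -(v k)) * b k = -∑ k, v k * q k := by
        rw [← Finset.sum_neg_distrib]
        refine Finset.sum_congr rfl fun k _ => ?_
        by_cases hk : k = i
        · subst hk
          simp only [if_pos rfl, zero_mul]
          have : q k = 0 := Function.update_self k 0 b
          rw [this]; simp
        · rw [if_neg hk]
          have : q k = b k := hb'ne k hk
          rw [this]; ring
      rw [this, neg_lt, neg_zero]
      have : ∑ k, v k * q k = ⟪v, q⟫ := (euclid_inner_eq v q).symm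
      rw [this, hvq]
      exact pow_pos (norm_pos_iff.mpr hvne) 2

theorem minimally_infeasible_reverse (m n : ℕ) (A : Matrix (Fin m) (Fin n) ℝ)
    (b : Fin m → ℝ)
    (hinf : ¬ ∃ x : Fin n → ℝ, ∀ i, A i ⬝ᵥ x ≤ b i)
    (hmin : ∀ i : Fin m, ∃ x : Fin n → ℝ, ∀ k, k ≠ i → A k ⬝ᵥ x ≤ b k) :
    ∀ i : Fin m, ∃ x : Fin n → ℝ, A i ⬝ᵥ x > b i ∧ ∀ k, k ≠ i → A k ⬝ᵥ x = b k := by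
  classical
  intro i
  rcases farkas m n A b with hfeas | ⟨l, hl0, hlA, hlb⟩
  · exact absurd hfeas hinf
  have hlpos : ∀ k, 0 < l k := by
    intro k
    rcases (hl0 k).lt_or_eq with h | h
    · exact h
    · exfalso
      obtain ⟨x, hx⟩ := hmin k
      exact cert_contra A b l hl0 hlA hlb k h.symm x hx
  rcases eq_system_alternative A b i with ⟨x, hx⟩ | ⟨μ, hμi, hμA, hμb⟩
  · refine ⟨x, ?_, hx⟩
    by_contra h
    push_neg at h
    exact hinf ⟨x, fun k => by
      by_cases hk : k = i
      · subst hk; exact h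
      · exact (hx k hk).le⟩
  · exfalso
    obtain ⟨j₀, _, hmax⟩ := Finset.exists_max_image Finset.univ (fun k => -μ k / l k)
      ⟨i, Finset.mem_univ i⟩
    set t : ℝ := max (-μ j₀ / l j₀) 0 with ht
    have ht0 : 0 ≤ t := le_max_right _ _
    set ν : Fin m → ℝ := fun k => μ k + t * l k with hν
    have hν0 : ∀ k, 0 ≤ ν k := by
      intro k
      have h1 : -μ k / l k ≤ t := le_trans (hmax k (Finset.mem_univ k)) (le_max_left _ _)
      rw [div_le_iff₀ (hlpos k)] at h1
      show 0 ≤ μ k + t * l k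
      linarith
    have hνA : ∀ j, ∑ k, ν k * A k j = 0 := by
      intro j
      have : ∑ k, ν k * A k j = ∑ k, μ k * A k j + t * ∑ k, l k * A k j := by
        rw [Finset.mul_sum, ← Finset.sum_add_distrib]
        exact Finset.sum_congr rfl fun k _ => by show (μ k + t * l k) * A k j = _; ring
      rw [this, hμA j, hlA j, mul_zero, add_zero]
    have hνb : ∑ k, ν k * b k < 0 := by
      have : ∑ k, ν k * b k = ∑ k, μ k * b k + t * ∑ k, l k * b k := by
        rw [Finset.mul_sum, ← Finset.sum_add_distrib]
        exact Finset.sum_congr rfl fun k _ => by show (μ k + t * l k) * b k = _; ring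
      rw [this]
      have h2 : t * ∑ k, l k * b k ≤ 0 := mul_nonpos_of_nonneg_of_nonpos ht0 hlb.le
      linarith
    by_cases hcase : -μ j₀ / l j₀ ≤ 0
    · have htz : t = 0 := max_eq_right hcase
      have hνi : ν i = 0 := by show μ i + t * l i = 0; rw [hμi, htz]; ring
      obtain ⟨x, hx⟩ := hmin i
      exact cert_contra A b ν hν0 hνA hνb i hνi x hx
    · push_neg at hcase
      have htz : t = -μ j₀ / l j₀ := max_eq_left hcase.le
      have hνj : ν j₀ = 0 := by
        show μ j₀ + t * l j₀ = 0
        rw [htz, div_mul_cancel₀ _ (hlpos j₀).ne']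
        ring
      obtain ⟨x, hx⟩ := hmin j₀
      exact cert_contra A b ν hν0 hνA hνb j₀ hνj x hx
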